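/- For every integer m ≥ 1, every real c > 0 and every real h > 0, the maximizer in the previous statement is unique: for every real q with q ≠ -h, F_m((q + 2h)/c) - F_m(q/c) < F_m(h/c) - F_m(-h/c). -/

import Mathlib

open MeasureTheory

/-- Student t pdf with `m` degrees of freedom. -/
noncomputable def tPdf (m : ℕ) (x : ℝ) : ℝ :=
  (Real.Gamma (((m : ℝ) + 1) / 2) / (Real.sqrt ((m : ℝ) * Real.pi) * Real.Gamma ((m : ℝ) / 2))) *
    (1 + x ^ 2 / (m : ℝ)) ^ (-(((m : ℝ) + 1) / 2))

/-- Student t cdf with `m` degrees of freedom. -/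
noncomputable def tCdf (m : ℕ) (x : ℝ) : ℝ :=
  ∫ u in Set.Iic x, tPdf m u

section aux

variable {m : ℕ} (hm : 1 ≤ m)

lemma tConst_pos (hm : 1 ≤ m) :
    0 < Real.Gamma (((m : ℝ) + 1) / 2) /
      (Real.sqrt ((m : ℝ) * Real.pi) * Real.Gamma ((m : ℝ) / 2)) := by
  have hm' : (0:ℝ) < m := by exact_mod_cast hm
  apply div_pos (Real.Gamma_pos_of_pos (by linarith))
  exact mul_pos (Real.sqrt_pos.mpr (by positivity)) (Real.Gamma_pos_of_pos (by positivity))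

lemma base_pos (x : ℝ) : (0:ℝ) < 1 + x ^ 2 / (m : ℝ) := by positivity

lemma tPdf_lt (hm : 1 ≤ m) {x y : ℝ} (hxy : x ^ 2 < y ^ 2) : tPdf m y < tPdf m x := by
  have hm' : (0:ℝ) < m := by exact_mod_cast hm
  unfold tPdf
  refine mul_lt_mul_of_pos_left ?_ (tConst_pos hm)
  exact Real.rpow_lt_rpow_of_neg (base_pos x)
    (by apply (add_lt_add_iff_left _).mpr; exact div_lt_div_of_pos_right hxy hm')
    (by linarith)

lemma tPdf_le (hm : 1 ≤ m) {x y : ℝ} (hxy : x ^ 2 ≤ y ^ 2) : tPdf m y ≤ tPdf m x := by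
  rcases eq_or_lt_of_le hxy with heq | hlt
  · unfold tPdf; rw [heq]
  · exact (tPdf_lt hm hlt).le

lemma tPdf_continuous : Continuous (tPdf m) := by
  apply Continuous.mul continuous_const
  apply Continuous.rpow_const (by continuity)
  intro x; exact Or.inl (ne_of_gt (base_pos x))

lemma tPdf_integrable (hm : 1 ≤ m) : Integrable (tPdf m) := by
  have hm' : (1:ℝ) ≤ m := by exact_mod_cast hm
  have hm0 : (0:ℝ) < m := by linarith
  set C := Real.Gamma (((m : ℝ) + 1) / 2) /
      (Real.sqrt ((m : ℝ) * Real.pi) * Real.Gamma ((m : ℝ) / 2)) with hC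
  have hCpos := tConst_pos hm
  have hint : Integrable (fun x : ℝ => C * (m : ℝ) * (1 + x ^ 2)⁻¹) :=
    integrable_inv_one_add_sq.const_mul _
  refine hint.mono (tPdf_continuous.aestronglyMeasurable) (Filter.Eventually.of_forall fun x => ?_)
  have hb := base_pos (m := m) x
  have h1 : (1 + x ^ 2 / (m : ℝ)) ^ (-(((m : ℝ) + 1) / 2)) ≤ (1 + x ^ 2 / (m : ℝ))⁻¹ := by
    have : (1 + x ^ 2 / (m : ℝ)) ^ (-(((m : ℝ) + 1) / 2)) ≤ (1 + x ^ 2 / (m : ℝ)) ^ (-1 : ℝ) := by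
      apply Real.rpow_le_rpow_of_exponent_le (le_add_of_nonneg_right (by positivity)) (by linarith)
    simpa [Real.rpow_neg_one] using this
  have h2 : (1 + x ^ 2 / (m : ℝ))⁻¹ ≤ (m : ℝ) * (1 + x ^ 2)⁻¹ := by
    rw [← div_eq_mul_inv, le_div_iff₀ (by positivity), inv_mul_eq_div, div_le_iff₀ hb]
    have : (1 + x ^ 2) ≤ (1 + x ^ 2 / (m : ℝ)) * (m : ℝ) := by
      field_simp
      nlinarith [sq_nonneg x]
    linarith
  have hnn : 0 ≤ tPdf m x := le_of_lt (by unfold tPdf; positivity)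
  rw [Real.norm_eq_abs, Real.norm_eq_abs, abs_of_nonneg hnn, abs_of_nonneg (by positivity)]
  calc tPdf m x = C * (1 + x ^ 2 / (m : ℝ)) ^ (-(((m : ℝ) + 1) / 2)) := rfl
    _ ≤ C * ((m : ℝ) * (1 + x ^ 2)⁻¹) := by
        refine mul_le_mul_of_nonneg_left (h1.trans h2) hCpos.le
    _ = C * (m : ℝ) * (1 + x ^ 2)⁻¹ := by ring

lemma tCdf_sub (hm : 1 ≤ m) (a b : ℝ) :
    tCdf m b - tCdf m a = ∫ x in a..b, tPdf m x := by
  exact intervalIntegral.integral_Iic_sub_Iic ((tPdf_integrable hm).integrableOn)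
    ((tPdf_integrable hm).integrableOn)

lemma key (hm : 1 ≤ m) {L a : ℝ} (hL : 0 < L) (ha : -L < a) :
    (∫ x in a..(a + 2 * L), tPdf m x) < ∫ x in (-L)..L, tPdf m x := by
  have hii : ∀ u v : ℝ, IntervalIntegrable (tPdf m) volume u v :=
    fun u v => (tPdf_integrable hm).intervalIntegrable
  have e1 : (∫ x in (-L)..L, tPdf m x)
      = (∫ x in (-L)..a, tPdf m x) + ∫ x in a..L, tPdf m x :=
    (intervalIntegral.integral_add_adjacent_intervals (hii _ _) (hii _ _)).symm
  have e2 : (∫ x in a..(a + 2 * L), tPdf m x)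
      = (∫ x in a..L, tPdf m x) + ∫ x in L..(a + 2 * L), tPdf m x :=
    (intervalIntegral.integral_add_adjacent_intervals (hii _ _) (hii _ _)).symm
  rw [e1, e2]
  have e3 : (∫ x in L..(a + 2 * L), tPdf m x) = ∫ x in (-L)..a, tPdf m (x + 2 * L) := by
    rw [intervalIntegral.integral_comp_add_right (tPdf m) (2 * L)]
    rw [show -L + 2 * L = L by ring]
  have hlt : (∫ x in (-L)..a, tPdf m (x + 2 * L)) < ∫ x in (-L)..a, tPdf m x := by
    have hpos : 0 < ∫ x in (-L)..a, (tPdf m x - tPdf m (x + 2 * L)) := by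
      apply intervalIntegral.intervalIntegral_pos_of_pos_on
      · exact ((hii _ _).sub ((tPdf_integrable hm).comp_add_right (2*L)).intervalIntegrable)
      · intro x hx
        have : x ^ 2 < (x + 2 * L) ^ 2 := by nlinarith [hx.1, hL]
        linarith [tPdf_lt hm this]
      · exact ha
    have := intervalIntegral.integral_sub (hii (-L) a)
      (((tPdf_integrable hm).comp_add_right (2*L)).intervalIntegrable)
    rw [this] at hpos
    linarith
  rw [e3]
  linarith

end aux

/-- For every integer `m ≥ 1`, real `c > 0` and real `h > 0`, the maximizer
`q = -h` of `q ↦ F_m((q + 2h)/c) - F_m(q/c)` is unique. -/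
theorem stmt7 (m : ℕ) (hm : 1 ≤ m) (c : ℝ) (hc : 0 < c) (h : ℝ) (hh : 0 < h)
    (q : ℝ) (hq : q ≠ -h) :
    tCdf m ((q + 2 * h) / c) - tCdf m (q / c) < tCdf m (h / c) - tCdf m (-h / c) := by
  set L := h / c with hLdef
  set a := q / c with hadef
  have hL : 0 < L := div_pos hh hc
  have hq2 : (q + 2 * h) / c = a + 2 * L := by simp only [hadef, hLdef]; field_simp
  rw [hq2, tCdf_sub hm, tCdf_sub hm]
  have hneg : -h / c = -L := by rw [neg_div]
  rw [hneg]
  rcases lt_or_gt_of_ne (show a ≠ -L by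
      simp only [hadef, hLdef]
      intro hcon
      apply hq
      field_simp at hcon
      linarith) with hlt | hgt
  · -- a < -L : use symmetry
    have heven : ∀ x : ℝ, tPdf m (-x) = tPdf m x := by
      intro x; simp [tPdf, neg_sq]
    have e : (∫ x in a..(a + 2 * L), tPdf m x)
        = ∫ x in (-(a + 2 * L))..(-(a + 2 * L) + 2 * L), tPdf m x := by
      rw [show (-(a + 2 * L) + 2 * L) = -a by ring,
        ← intervalIntegral.integral_comp_neg (tPdf m)]
      simp only [heven]
    rw [e]
    exact key hm hL (by linarith)
  · exact key hm hL hgt
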